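/- Let A be an m×n real matrix of rank k. Then there exists a set J of k column indices and a k×n real matrix X such that A = A(:,J)·X, the k×k submatrix X(:,J) is the identity matrix, and every entry of X has absolute value at most 1. (Interpolative decomposition: k columns of A form a basis for the column space of A, and every other column is a linear combination of them with coefficients bounded by 1 in magnitude.) -/

import Mathlib

open Matrix

/-- Interpolative decomposition: an `m × n` real matrix of rank `k` can be
written as `A = A(:,J) · X` where `J` selects `k` columns of `A`, `X` contains
the `k × k` identity as the submatrix of columns `J`, and every entry of `X`
is bounded by `1` in absolute value. -/
theorem interpolative_decomposition
    {m n k : ℕ} (A : Matrix (Fin m) (Fin n) ℝ) (hrank : A.rank = k) :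
    ∃ (J : Fin k → Fin n), Function.Injective J ∧
      ∃ X : Matrix (Fin k) (Fin n) ℝ,
        A = A.submatrix id J * X ∧
        X.submatrix id J = 1 ∧
        ∀ i j, |X i j| ≤ 1 := by
  classical
  set R := LinearMap.range A.mulVecLin with hRdef
  have hfin : Module.finrank ℝ R = k := hrank
  let b : Module.Basis (Fin k) ℝ R := Module.finBasisOfFinrankEq ℝ R hfin
  have hcol : ∀ j, Aᵀ j ∈ R := fun j => ⟨Pi.single j 1, Matrix.mulVec_single_one A j⟩
  let C : Matrix (Fin m) (Fin k) ℝ := fun i x => (b x : Fin m → ℝ) i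
  let B : Matrix (Fin k) (Fin n) ℝ := fun x j => b.repr ⟨Aᵀ j, hcol j⟩ x
  have hAB : A = C * B := by
    ext i j
    have h1 : ((∑ x, b.repr ⟨Aᵀ j, hcol j⟩ x • b x : R) : Fin m → ℝ) i
        = ((⟨Aᵀ j, hcol j⟩ : R) : Fin m → ℝ) i := by rw [b.sum_repr]
    have h2 : ((⟨Aᵀ j, hcol j⟩ : R) : Fin m → ℝ) i = A i j := rfl
    rw [Matrix.mul_apply, ← h2, ← h1]
    rw [AddSubmonoidClass.coe_finset_sum]
    simp only [Finset.sum_apply, Pi.smul_apply, SetLike.val_smul, smul_eq_mul]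
    exact Finset.sum_congr rfl fun x _ => (mul_comm _ _)
  have hBrank : B.rank = k := by
    refine le_antisymm (B.rank_le_card_height.trans_eq (by simp)) ?_
    calc k = A.rank := hrank.symm
      _ = (C * B).rank := by rw [hAB]
      _ ≤ B.rank := Matrix.rank_mul_le_right C B
  have htop : LinearMap.range B.mulVecLin = ⊤ := by
    apply Submodule.eq_top_of_finrank_eq
    have : Module.finrank ℝ (LinearMap.range B.mulVecLin) = B.rank := rfl
    rw [this, hBrank, Module.finrank_pi]
    simp
  have hspan : Submodule.span ℝ (Set.range Bᵀ) = ⊤ := by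
    rw [show Set.range Bᵀ = Set.range B.col from rfl, ← Matrix.range_mulVecLin]; exact htop
  obtain ⟨s, hs_sub, hs_span, hs_li⟩ := exists_linearIndependent ℝ (Set.range Bᵀ)
  rw [hspan] at hs_span
  have hsfin : s.Finite := hs_li.setFinite
  haveI := hsfin.fintype
  let hbasis : Module.Basis s ℝ (Fin k → ℝ) := Module.Basis.mk hs_li (by rw [Subtype.range_coe, hs_span])
  have hcard : Fintype.card s = k := by
    have h := Module.finrank_eq_card_basis hbasis
    rw [Module.finrank_pi] at h
    simpa using h.symm
  let e : Fin k ≃ s := (Fintype.equivFinOfCardEq hcard).symm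
  have hchoice : ∀ x : s, ∃ j, Bᵀ j = (x : Fin k → ℝ) := fun x => hs_sub x.2
  choose g hg using hchoice
  have hJ1 : ∃ J : Fin k → Fin n, (B.submatrix id J).det ≠ 0 := by
    refine ⟨fun i => g (e i), ?_⟩
    have hli : LinearIndependent ℝ (fun i => (B.submatrix id (fun i => g (e i)))ᵀ i) := by
      have heq : (fun i : Fin k => (B.submatrix id (fun i => g (e i)))ᵀ i)
          = fun i => ((e i : Fin k → ℝ)) := by
        funext i
        exact hg (e i)
      rw [heq]
      exact hs_li.comp e e.injective
    have := Matrix.linearIndependent_cols_iff_isUnit.mp hli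
    exact ((Matrix.isUnit_iff_isUnit_det _).mp this).ne_zero
  have hne : Nonempty (Fin k → Fin n) := by
    rcases Nat.eq_zero_or_pos k with hk | hk
    · subst hk; exact ⟨Fin.elim0⟩
    · have hkn := A.rank_le_card_width
      rw [hrank] at hkn
      simp only [Fintype.card_fin] at hkn
      exact ⟨fun _ => Fin.mk 0 (lt_of_lt_of_le hk hkn)⟩
  obtain ⟨J, -, hJmax⟩ := Finset.exists_max_image Finset.univ
    (fun J : Fin k → Fin n => |(B.submatrix id J).det|) ⟨hne.some, Finset.mem_univ _⟩
  obtain ⟨J1, hJ1⟩ := hJ1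
  have hdet : (B.submatrix id J).det ≠ 0 := by
    intro h0
    have h := hJmax J1 (Finset.mem_univ _)
    rw [h0] at h
    simp only [abs_zero] at h
    exact hJ1 (abs_nonpos_iff.mp h)
  set M : Matrix (Fin k) (Fin k) ℝ := B.submatrix id J with hMdef
  have hdetU : IsUnit M.det := isUnit_iff_ne_zero.mpr hdet
  have hinj : Function.Injective J := by
    intro a c hac
    by_contra hne'
    exact hdet (Matrix.det_zero_of_column_eq hne' (fun x => by
      show B x (J a) = B x (J c); rw [hac]))
  refine ⟨J, hinj, M⁻¹ * B, ?_, ?_, ?_⟩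
  · have hsub : A.submatrix id J = C * M := by
      rw [hAB]; ext i j; rfl
    rw [hsub, Matrix.mul_assoc, ← Matrix.mul_assoc M, Matrix.mul_nonsing_inv M hdetU,
      Matrix.one_mul, ← hAB]
  · have hsub : (M⁻¹ * B).submatrix id J = M⁻¹ * M := by ext i j; rfl
    rw [hsub, Matrix.nonsing_inv_mul M hdetU]
  · intro i j
    have hX : (M⁻¹ * B) i j = (M.det)⁻¹ * (B.submatrix id (Function.update J i j)).det := by
      have h1 : (M⁻¹ * B) i j = (M.det)⁻¹ * (adjugate M *ᵥ (fun x => B x j)) i := by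
        rw [Matrix.inv_def]
        simp only [Matrix.mul_apply, Matrix.smul_apply, smul_eq_mul, Matrix.mulVec,
          dotProduct, Finset.mul_sum, Ring.inverse_eq_inv', mul_assoc]
      rw [h1, ← Matrix.cramer_eq_adjugate_mulVec, Matrix.cramer_apply]
      congr 2
      ext a c
      by_cases hc : c = i
      · subst hc; simp [Matrix.updateCol_apply]
      · simp [Matrix.updateCol_apply, hc, Function.update_apply, hMdef]
    rw [hX, abs_mul, abs_inv]
    have hpos : 0 < |M.det| := abs_pos.mpr hdet
    calc |M.det|⁻¹ * |(B.submatrix id (Function.update J i j)).det|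
        ≤ |M.det|⁻¹ * |M.det| := by
          apply mul_le_mul_of_nonneg_left _ (inv_nonneg.mpr hpos.le)
          exact hJmax (Function.update J i j) (Finset.mem_univ _)
      _ = 1 := inv_mul_cancel₀ hpos.ne'
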